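/- Fix ε ∈ (0, 1), let r = r(n) be a sequence of natural numbers with 2 ≤ r(n) and r(n) = o(n^{1/3}), and let p = p(n) = (1−ε)·p_c(n, r(n)). Let Y_n be the number of families A ⊆ [n]^(r(n)) with |A| = binom(n−1,r(n)−1) + 1 and d(A) = binom(n−1,r(n)−1) that induce an independent set in K_{p(n)}(n, r(n)). Then E[Y_n] → ∞ as n → ∞. -/

import Mathlib

open Finset Filter Real Asymptotics

noncomputable section

open Classical in
/-- Probability of the event `E` under the product Bernoulli(`p`) measure on `ι → Bool`
(each coordinate `true`, i.e. "retained", independently with probability `p`). -/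
def bprob {ι : Type*} [Fintype ι] (p : ℝ) (E : Set (ι → Bool)) : ℝ :=
  ∑ ω : ι → Bool, if ω ∈ E then ∏ e : ι, (if ω e then p else 1 - p) else 0

open Classical in
/-- Expectation of `X` under the product Bernoulli(`p`) measure on `ι → Bool`. -/
def bexpect {ι : Type*} [Fintype ι] (p : ℝ) (X : (ι → Bool) → ℝ) : ℝ :=
  ∑ ω : ι → Bool, (∏ e : ι, (if ω e then p else 1 - p)) * X ω

/-- The threshold function `p_c(n,r) = ((r+1) log n - r log r) / C(n-1, r-1)`. -/
def pc (n r : ℕ) : ℝ :=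
  (((r : ℝ) + 1) * Real.log n - (r : ℝ) * Real.log r) / ((n - 1).choose (r - 1))

/-- `A` is a family of `r`-element subsets of `[n]`. -/
def isRFamily (n r : ℕ) (A : Finset (Finset (Fin n))) : Prop :=
  ∀ S ∈ A, S.card = r

/-- `A` induces an independent set in the random subgraph of the Kneser graph determined by
the edge sample `ω` (`ω e = true` meaning the edge `e` was retained): no retained edge, i.e.
pair of disjoint sets, has both endpoints in `A`. -/
def inducesIndep (n : ℕ) (ω : Sym2 (Finset (Fin n)) → Bool)
    (A : Finset (Finset (Fin n))) : Prop :=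
  ∀ S ∈ A, ∀ T ∈ A, S ≠ T → Disjoint S T → ω s(S, T) = false

open Classical in
/-- The independence number of the random subgraph `K_p(n,r)` determined by the
edge sample `ω`: the largest size of a family of `r`-sets inducing an independent set. -/
def kneserAlpha (n r : ℕ) (ω : Sym2 (Finset (Fin n)) → Bool) : ℕ :=
  Finset.sup
    (Finset.univ.filter fun A : Finset (Finset (Fin n)) =>
      isRFamily n r A ∧ inducesIndep n ω A)
    Finset.card

/-- The star centred at `x`: all `r`-element subsets of `[n]` containing `x`. -/
def kstar (n r : ℕ) (x : Fin n) : Finset (Finset (Fin n)) :=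
  Finset.univ.filter fun S => S.card = r ∧ x ∈ S

/-- `A_x`: the subfamily of members of `A` containing `x`. -/
def subAt (n : ℕ) (A : Finset (Finset (Fin n))) (x : Fin n) : Finset (Finset (Fin n)) :=
  A.filter fun S => x ∈ S

/-- The maximum degree `d(A) = max_x |A_x|`. -/
def maxDeg (n : ℕ) (A : Finset (Finset (Fin n))) : ℕ :=
  Finset.univ.sup fun x : Fin n => (subAt n A x).card

open Classical in
/-- `e(A)`: the number of unordered pairs `{S, T} ⊆ A` with `S ∩ T = ∅`, i.e. the number of
edges of the Kneser graph induced by `A`. -/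
def eCount (n : ℕ) (A : Finset (Finset (Fin n))) : ℕ :=
  (A.sym2.filter fun e => ¬ e.IsDiag ∧ ∀ S ∈ e, ∀ T ∈ e, S ≠ T → Disjoint S T).card

open Classical in
/-- `Y`: the number of families of `r`-sets of size `C(n-1,r-1) + 1` with maximum degree
`C(n-1,r-1)` (i.e. containing a full star) inducing an independent set in the sample `ω`. -/
def Ycount (n r : ℕ) (ω : Sym2 (Finset (Fin n)) → Bool) : ℕ :=
  (Finset.univ.filter fun A : Finset (Finset (Fin n)) =>
    isRFamily n r A ∧ A.card = (n - 1).choose (r - 1) + 1 ∧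
      maxDeg n A = (n - 1).choose (r - 1) ∧ inducesIndep n ω A).card

open Classical in
/-- `X_i`: the number of families of `r`-sets of size `C(n-1,r-1)` with maximum degree
`C(n-1,r-1) - i` inducing an independent set in the sample `ω`. -/
def Xcount (n r i : ℕ) (ω : Sym2 (Finset (Fin n)) → Bool) : ℕ :=
  (Finset.univ.filter fun A : Finset (Finset (Fin n)) =>
    isRFamily n r A ∧ A.card = (n - 1).choose (r - 1) ∧
      maxDeg n A = (n - 1).choose (r - 1) - i ∧ inducesIndep n ω A).card



-- ===== auxiliary lemmas =====

lemma bprob_forall_false {ι : Type*} [Fintype ι] (p : ℝ) (B : Finset ι) :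
    bprob p {ω : ι → Bool | ∀ e ∈ B, ω e = false} = (1 - p) ^ B.card := by
  classical
  unfold bprob
  simp only [Set.mem_setOf_eq]
  trans (∑ ω : ι → Bool,
      ∏ e : ι, (if e ∈ B then (if ω e then 0 else 1 - p) else (if ω e then p else 1 - p)))
  · refine Finset.sum_congr rfl fun ω _ => ?_
    by_cases h : ∀ e ∈ B, ω e = false
    · rw [if_pos h]
      refine Finset.prod_congr rfl fun e _ => ?_
      by_cases he : e ∈ B
      · simp [he, h e he]
      · simp [he]
    · rw [if_neg h]
      push_neg at h
      obtain ⟨e₀, he₀, hωe₀⟩ := h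
      rw [eq_comm]
      apply Finset.prod_eq_zero (Finset.mem_univ e₀)
      have ht : ω e₀ = true := by revert hωe₀; cases ω e₀ <;> simp
      simp [he₀, ht]
  rw [← (Fintype.prod_sum (fun (e : ι) (b : Bool) =>
    if e ∈ B then (if b then 0 else 1 - p) else (if b then p else 1 - p)))]
  have h3 : ∀ e : ι, (∑ b : Bool, (if e ∈ B then (if b then (0:ℝ) else 1 - p) else (if b then p else 1 - p))) = if e ∈ B then 1 - p else 1 := by
    intro e
    by_cases he : e ∈ B
    · simp [he]
    · simp [he]
  rw [Finset.prod_congr rfl fun e _ => h3 e, Finset.prod_ite_mem, Finset.univ_inter,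
    Finset.prod_const]

lemma bexpect_sum {ι κ : Type*} [Fintype ι] (p : ℝ) (s : Finset κ) (f : κ → (ι → Bool) → ℝ) :
    bexpect p (fun ω => ∑ a ∈ s, f a ω) = ∑ a ∈ s, bexpect p (f a) := by
  unfold bexpect
  rw [Finset.sum_comm]
  exact Finset.sum_congr rfl fun ω _ => by rw [Finset.mul_sum]

open Classical in
lemma bexpect_indicator {ι : Type*} [Fintype ι] (p : ℝ) (E : Set (ι → Bool)) :
    bexpect p (fun ω => if ω ∈ E then (1:ℝ) else 0) = bprob p E := by
  unfold bexpect bprob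
  exact Finset.sum_congr rfl fun ω _ => by by_cases h : ω ∈ E <;> simp [h]

lemma bexpect_mono {ι : Type*} [Fintype ι] {p : ℝ} (hp0 : 0 ≤ p) (hp1 : p ≤ 1)
    {X Y : (ι → Bool) → ℝ} (h : ∀ ω, X ω ≤ Y ω) : bexpect p X ≤ bexpect p Y := by
  unfold bexpect
  refine Finset.sum_le_sum fun ω _ => ?_
  refine mul_le_mul_of_nonneg_left (h ω) (Finset.prod_nonneg fun e _ => ?_)
  by_cases he : ω e
  · simp [he]; linarith
  · simp [he]; linarith


lemma mem_kstar {n r : ℕ} {x : Fin n} {S : Finset (Fin n)} :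
    S ∈ kstar n r x ↔ S.card = r ∧ x ∈ S := by
  simp [kstar]

lemma card_kstar (n r : ℕ) (hr : 1 ≤ r) (x : Fin n) :
    (kstar n r x).card = (n - 1).choose (r - 1) := by
  classical
  have h : (kstar n r x).card = ((Finset.univ.erase x).powersetCard (r - 1)).card := by
    apply Finset.card_bij' (fun S _ => S.erase x) (fun T _ => insert x T)
    · intro S hS
      rw [mem_kstar] at hS
      exact Finset.insert_erase hS.2
    · intro T hT
      rw [Finset.mem_powersetCard] at hT
      have hx : x ∉ T := fun hxT => (Finset.mem_erase.mp (hT.1 hxT)).1 rfl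
      exact Finset.erase_insert hx
    · intro S hS
      rw [mem_kstar] at hS
      rw [Finset.mem_powersetCard]
      exact ⟨Finset.erase_subset_erase x (Finset.subset_univ S),
        by rw [Finset.card_erase_of_mem hS.2, hS.1]⟩
    · intro T hT
      rw [Finset.mem_powersetCard] at hT
      have hx : x ∉ T := fun hxT => (Finset.mem_erase.mp (hT.1 hxT)).1 rfl
      rw [mem_kstar]
      refine ⟨?_, Finset.mem_insert_self x T⟩
      rw [Finset.card_insert_of_notMem hx, hT.2]
      omega
  rw [h, Finset.card_powersetCard, Finset.card_erase_of_mem (Finset.mem_univ x),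
    Finset.card_univ, Fintype.card_fin]


section Pair
variable {n r : ℕ} (hr : 2 ≤ r) {x : Fin n} {T : Finset (Fin n)}
  (hT : T ∈ (Finset.univ.erase x).powersetCard r)

-- basic facts about T
lemma T_not_mem_star (hT : T ∈ (Finset.univ.erase x).powersetCard r) : x ∉ T := by
  rw [Finset.mem_powersetCard] at hT
  exact fun hxT => (Finset.mem_erase.mp (hT.1 hxT)).1 rfl

lemma T_card (hT : T ∈ (Finset.univ.erase x).powersetCard r) : T.card = r :=
  (Finset.mem_powersetCard.mp hT).2

lemma pairFam_rFamily (hT : T ∈ (Finset.univ.erase x).powersetCard r) :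
    isRFamily n r (insert T (kstar n r x)) := by
  intro S hS
  rcases Finset.mem_insert.mp hS with h | h
  · rw [h]; exact T_card hT
  · exact (mem_kstar.mp h).1

lemma pairFam_card (hr : 2 ≤ r) (hT : T ∈ (Finset.univ.erase x).powersetCard r) :
    (insert T (kstar n r x)).card = (n - 1).choose (r - 1) + 1 := by
  rw [Finset.card_insert_of_notMem (fun h => T_not_mem_star hT (mem_kstar.mp h).2),
    card_kstar n r (by omega) x]

lemma pairFam_maxDeg (hr : 2 ≤ r) (hn : 0 < n)
    (hT : T ∈ (Finset.univ.erase x).powersetCard r) :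
    maxDeg n (insert T (kstar n r x)) = (n - 1).choose (r - 1) := by
  apply le_antisymm
  · apply Finset.sup_le
    intro y _
    calc (subAt n (insert T (kstar n r x)) y).card ≤ (kstar n r y).card := by
          apply Finset.card_le_card
          intro S hS
          rw [subAt, Finset.mem_filter] at hS
          exact mem_kstar.mpr ⟨pairFam_rFamily hT S hS.1, hS.2⟩
      _ = (n - 1).choose (r - 1) := card_kstar n r (by omega) y
  · calc (n - 1).choose (r - 1) = (kstar n r x).card := (card_kstar n r (by omega) x).symm
      _ ≤ (subAt n (insert T (kstar n r x)) x).card := by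
          apply Finset.card_le_card
          intro S hS
          rw [subAt, Finset.mem_filter]
          exact ⟨Finset.mem_insert_of_mem hS, (mem_kstar.mp hS).2⟩
      _ ≤ maxDeg n (insert T (kstar n r x)) :=
          Finset.le_sup (f := fun y : Fin n => (subAt n (insert T (kstar n r x)) y).card)
            (Finset.mem_univ x)

end Pair


open Classical in
/-- the set of potential Kneser edges inside the family `insert T (kstar n r x)` -/
def edgeSet (n r : ℕ) (x : Fin n) (T : Finset (Fin n)) : Finset (Sym2 (Finset (Fin n))) :=
  ((kstar n r x).filter fun S => Disjoint S T).image fun S => s(S, T)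

lemma edgeSet_card_le (n r : ℕ) (hr : 1 ≤ r) (x : Fin n) (T : Finset (Fin n)) :
    (edgeSet n r x T).card ≤ (n - 1).choose (r - 1) := by
  classical
  calc (edgeSet n r x T).card ≤ ((kstar n r x).filter fun S => Disjoint S T).card :=
        Finset.card_image_le
    _ ≤ (kstar n r x).card := Finset.card_filter_le _ _
    _ = (n - 1).choose (r - 1) := card_kstar n r hr x

lemma indep_iff_edgeSet (n r : ℕ) (hr : 2 ≤ r) (x : Fin n) (T : Finset (Fin n))
    (hT : T ∈ (Finset.univ.erase x).powersetCard r) (ω : Sym2 (Finset (Fin n)) → Bool) :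
    inducesIndep n ω (insert T (kstar n r x)) ↔ ∀ e ∈ edgeSet n r x T, ω e = false := by
  classical
  constructor
  · intro h e he
    rw [edgeSet, Finset.mem_image] at he
    obtain ⟨S, hS, rfl⟩ := he
    rw [Finset.mem_filter] at hS
    have hST : S ≠ T := by
      rintro rfl
      exact T_not_mem_star hT (mem_kstar.mp hS.1).2
    exact h S (Finset.mem_insert_of_mem hS.1) T (Finset.mem_insert_self T _) hST hS.2
  · intro h S hS S' hS' hne hdisj
    rcases Finset.mem_insert.mp hS with h1 | h1
    · rcases Finset.mem_insert.mp hS' with h2 | h2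
      · exact absurd (h1.trans h2.symm) hne
      · subst h1
        rw [Sym2.eq_swap]
        exact h s(S', S) (Finset.mem_image_of_mem _
          (Finset.mem_filter.mpr ⟨h2, hdisj.symm⟩))
    · rcases Finset.mem_insert.mp hS' with h2 | h2
      · subst h2
        exact h s(S, S') (Finset.mem_image_of_mem _ (Finset.mem_filter.mpr ⟨h1, hdisj⟩))
      · exact absurd (Finset.disjoint_left.mp hdisj (mem_kstar.mp h1).2
          (mem_kstar.mp h2).2) (by simp)


open Classical in
lemma pairFam_filter {n r : ℕ} (hr : 1 ≤ r) {x : Fin n} {T : Finset (Fin n)}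
    (hT : T ∈ (Finset.univ.erase x).powersetCard r) :
    (insert T (kstar n r x)).filter (fun S => x ∉ S) = {T} := by
  ext S
  simp only [Finset.mem_filter, Finset.mem_insert, Finset.mem_singleton]
  constructor
  · rintro ⟨h1 | h1, h2⟩
    · exact h1
    · exact absurd (mem_kstar.mp h1).2 h2
  · rintro rfl
    exact ⟨Or.inl rfl, T_not_mem_star hT⟩

lemma kstar_filter_two {n r : ℕ} (hr : 2 ≤ r) (hn : r + 2 ≤ n) (x x' : Fin n) (hxx : x ≠ x') :
    2 ≤ ((kstar n r x').filter (fun S => x ∉ S)).card := by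
  classical
  have hsub : ((((Finset.univ.erase x).erase x').powersetCard (r-1)).image (insert x'))
      ⊆ (kstar n r x').filter (fun S => x ∉ S) := by
    intro S hS
    rw [Finset.mem_image] at hS
    obtain ⟨U, hU, rfl⟩ := hS
    rw [Finset.mem_powersetCard] at hU
    have hx'U : x' ∉ U := fun h => (Finset.mem_erase.mp (hU.1 h)).1 rfl
    have hxU : x ∉ U := fun h => (Finset.mem_erase.mp (Finset.mem_erase.mp (hU.1 h)).2).1 rfl
    rw [Finset.mem_filter, mem_kstar]
    refine ⟨⟨?_, Finset.mem_insert_self x' U⟩, ?_⟩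
    · rw [Finset.card_insert_of_notMem hx'U, hU.2]; omega
    · simp only [Finset.mem_insert]
      rintro (rfl | h)
      · exact hxx rfl
      · exact hxU h
  have hinj : Set.InjOn (insert x')
      (((((Finset.univ.erase x).erase x').powersetCard (r-1)) : Finset (Finset (Fin n))) : Set (Finset (Fin n))) := by
    intro U hU V hV h
    rw [Finset.mem_coe, Finset.mem_powersetCard] at hU hV
    have hU' : x' ∉ U := fun hh => (Finset.mem_erase.mp (hU.1 hh)).1 rfl
    have hV' : x' ∉ V := fun hh => (Finset.mem_erase.mp (hV.1 hh)).1 rfl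
    rw [← Finset.erase_insert hU', ← Finset.erase_insert hV', h]
  have hcard : ((((Finset.univ.erase x).erase x').powersetCard (r-1)).image (insert x')).card
      = (n - 2).choose (r - 1) := by
    rw [Finset.card_image_of_injOn hinj, Finset.card_powersetCard,
      Finset.card_erase_of_mem (Finset.mem_erase.mpr ⟨Ne.symm hxx, Finset.mem_univ x'⟩),
      Finset.card_erase_of_mem (Finset.mem_univ x), Finset.card_univ, Fintype.card_fin]
    have : n - 1 - 1 = n - 2 := by omega
    rw [this]

  have h2 : 2 ≤ (n - 2).choose (r - 1) := by
    obtain ⟨m, hm⟩ : ∃ m, n - 2 = m + 1 := ⟨n - 3, by omega⟩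
    obtain ⟨k, hk⟩ : ∃ k, r - 1 = k + 1 := ⟨r - 2, by omega⟩
    rw [hm, hk, Nat.choose_succ_succ]
    have c1 := Nat.choose_pos (show k ≤ m by omega)
    have c2 := Nat.choose_pos (show k.succ ≤ m by omega)
    omega
  calc 2 ≤ (n - 2).choose (r - 1) := h2
    _ = _ := hcard.symm
    _ ≤ _ := Finset.card_le_card hsub

open Classical in
lemma pairFam_inj {n r : ℕ} (hr : 2 ≤ r) (hn : r + 2 ≤ n)
    {x x' : Fin n} {T T' : Finset (Fin n)}
    (hT : T ∈ (Finset.univ.erase x).powersetCard r)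
    (hT' : T' ∈ (Finset.univ.erase x').powersetCard r)
    (h : insert T (kstar n r x) = insert T' (kstar n r x')) : x = x' ∧ T = T' := by
  classical
  have hxx : x = x' := by
    by_contra hxx
    have hsub : (kstar n r x').filter (fun S => x ∉ S)
        ⊆ (insert T (kstar n r x)).filter (fun S => x ∉ S) := by
      apply Finset.filter_subset_filter
      rw [h]
      exact fun S hS => Finset.mem_insert_of_mem hS
    rw [pairFam_filter (by omega) hT] at hsub
    have := (Finset.card_le_card hsub).trans_lt (by simp : ({T} : Finset (Finset (Fin n))).card < 2)
    exact absurd (kstar_filter_two hr hn x x' hxx) (by omega)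
  subst hxx
  refine ⟨rfl, ?_⟩
  have := pairFam_filter (n := n) (r := r) (by omega) hT
  rw [h, pairFam_filter (by omega) hT'] at this
  exact (Finset.singleton_injective this).symm


open Classical in
lemma main_lower (n r : ℕ) (p : ℝ) (hp0 : 0 ≤ p) (hp1 : p ≤ 1) (hr : 2 ≤ r)
    (hn : r + 2 ≤ n) :
    (n : ℝ) * ((n - 1).choose r) * (1 - p) ^ ((n - 1).choose (r - 1)) ≤
      bexpect p (fun ω : Sym2 (Finset (Fin n)) → Bool => (Ycount n r ω : ℝ)) := by
  classical
  set P : Finset ((_ : Fin n) × Finset (Fin n)) :=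
    (Finset.univ : Finset (Fin n)).sigma fun x => (Finset.univ.erase x).powersetCard r with hP
  have hPcard : P.card = n * (n - 1).choose r := by
    rw [hP, Finset.card_sigma]
    have : ∀ x : Fin n, ((Finset.univ.erase x).powersetCard r).card = (n - 1).choose r := by
      intro x
      rw [Finset.card_powersetCard, Finset.card_erase_of_mem (Finset.mem_univ x),
        Finset.card_univ, Fintype.card_fin]
    rw [Finset.sum_congr rfl fun x _ => this x, Finset.sum_const, Finset.card_univ,
      Fintype.card_fin, smul_eq_mul]
  have hcount : ∀ ω : Sym2 (Finset (Fin n)) → Bool,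
      (∑ q ∈ P, if inducesIndep n ω (insert q.2 (kstar n r q.1)) then (1:ℝ) else 0) ≤
        (Ycount n r ω : ℝ) := by
    intro ω
    rw [Finset.sum_boole]
    have hinj : Set.InjOn (fun q : (_ : Fin n) × Finset (Fin n) => insert q.2 (kstar n r q.1))
        ((P.filter fun q => inducesIndep n ω (insert q.2 (kstar n r q.1))) : Set _) := by
      intro q hq q' hq' hEq
      rw [Finset.coe_filter, Set.mem_setOf_eq] at hq hq'
      rw [hP, Finset.mem_sigma] at *
      obtain ⟨x2, T2⟩ := pairFam_inj hr hn hq.1.2 hq'.1.2 hEq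
      exact Sigma.ext x2 (by rw [T2])
    have hsub : (P.filter fun q => inducesIndep n ω (insert q.2 (kstar n r q.1))).image
        (fun q : (_ : Fin n) × Finset (Fin n) => insert q.2 (kstar n r q.1)) ⊆
        Finset.univ.filter fun A : Finset (Finset (Fin n)) =>
          isRFamily n r A ∧ A.card = (n - 1).choose (r - 1) + 1 ∧
            maxDeg n A = (n - 1).choose (r - 1) ∧ inducesIndep n ω A := by
      intro A hA
      rw [Finset.mem_image] at hA
      obtain ⟨q, hq, rfl⟩ := hA
      rw [Finset.mem_filter] at hq
      have hqP := hq.1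
      rw [hP, Finset.mem_sigma] at hqP
      refine Finset.mem_filter.mpr ⟨Finset.mem_univ _,
        pairFam_rFamily hqP.2, pairFam_card hr hqP.2,
        pairFam_maxDeg hr (by omega) hqP.2, hq.2⟩
    have := (Finset.card_image_of_injOn hinj).symm.trans_le (Finset.card_le_card hsub)
    unfold Ycount
    exact_mod_cast this
  calc (n : ℝ) * ((n - 1).choose r) * (1 - p) ^ ((n - 1).choose (r - 1))
      = ∑ _q ∈ P, (1 - p) ^ ((n - 1).choose (r - 1)) := by
        rw [Finset.sum_const, hPcard, nsmul_eq_mul]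
        push_cast
        ring
    _ ≤ ∑ q ∈ P, (1 - p) ^ ((edgeSet n r q.1 q.2).card) := by
        refine Finset.sum_le_sum fun q hq => ?_
        exact pow_le_pow_of_le_one (by linarith) (by linarith)
          (edgeSet_card_le n r (by omega) q.1 q.2)
    _ = ∑ q ∈ P, bprob p {ω : Sym2 (Finset (Fin n)) → Bool |
          inducesIndep n ω (insert q.2 (kstar n r q.1))} := by
        refine Finset.sum_congr rfl fun q hq => ?_
        rw [hP, Finset.mem_sigma] at hq
        rw [show {ω : Sym2 (Finset (Fin n)) → Bool |
            inducesIndep n ω (insert q.2 (kstar n r q.1))} =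
            {ω : Sym2 (Finset (Fin n)) → Bool | ∀ e ∈ edgeSet n r q.1 q.2, ω e = false} from
          Set.ext fun ω => indep_iff_edgeSet n r hr q.1 q.2 hq.2 ω,
          bprob_forall_false]
    _ = bexpect p (fun ω : Sym2 (Finset (Fin n)) → Bool => ∑ q ∈ P,
          if inducesIndep n ω (insert q.2 (kstar n r q.1)) then (1:ℝ) else 0) := by
        rw [bexpect_sum]
        exact Finset.sum_congr rfl fun q _ => (bexpect_indicator p _).symm
    _ ≤ bexpect p (fun ω : Sym2 (Finset (Fin n)) → Bool => (Ycount n r ω : ℝ)) :=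
        bexpect_mono hp0 hp1 hcount


lemma two_r_le (n r : ℕ) (hr : 2 ≤ r) (hrn : ((r:ℝ)) ≤ (n:ℝ) ^ ((1:ℝ)/3)) (hn : 8 ≤ n) :
    2 * r ≤ n := by
  have hnp : (0:ℝ) < (n:ℝ) := by positivity
  set a := (n:ℝ) ^ ((1:ℝ)/3) with ha
  have ha3 : a ^ (3:ℕ) = (n:ℝ) := by
    rw [ha, ← Real.rpow_natCast ((n:ℝ) ^ ((1:ℝ)/3)) 3, ← Real.rpow_mul hnp.le]
    norm_num
  have ha2 : (2:ℝ) ≤ a := le_trans (by exact_mod_cast hr) hrn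
  have : (2*r : ℝ) ≤ (n:ℝ) := by
    calc (2*r:ℝ) ≤ 2*a := by linarith
      _ ≤ a^(3:ℕ) := by
          have h4 : (4:ℝ) ≤ a*a := by nlinarith
          calc 2*a ≤ (a*a)*a := by nlinarith
            _ = a^(3:ℕ) := by ring
      _ = (n:ℝ) := ha3
  exact_mod_cast this

lemma log_r_le (n r : ℕ) (hr : 2 ≤ r) (hrn : ((r:ℝ)) ≤ (n:ℝ) ^ ((1:ℝ)/3)) (hn : 8 ≤ n) :
    Real.log r ≤ Real.log n / 3 := by
  have hnp : (0:ℝ) < (n:ℝ) := by positivity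
  have := Real.log_le_log (by positivity : (0:ℝ) < (r:ℝ)) hrn
  rwa [Real.log_rpow hnp, one_div, inv_mul_eq_div] at this

lemma L_nonneg (n r : ℕ) (hr : 2 ≤ r) (hrn : ((r:ℝ)) ≤ (n:ℝ) ^ ((1:ℝ)/3)) (hn : 8 ≤ n) :
    0 ≤ ((r : ℝ) + 1) * Real.log n - (r : ℝ) * Real.log r := by
  have h1 := log_r_le n r hr hrn hn
  have h2 : (0:ℝ) ≤ Real.log n := Real.log_nonneg (by exact_mod_cast Nat.one_le_of_lt hn)
  have h3 : (2:ℝ) ≤ (r:ℝ) := by exact_mod_cast hr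
  nlinarith

lemma pc_nonneg (n r : ℕ) (hr : 2 ≤ r) (hrn : ((r:ℝ)) ≤ (n:ℝ) ^ ((1:ℝ)/3)) (hn : 8 ≤ n) :
    0 ≤ pc n r :=
  div_nonneg (L_nonneg n r hr hrn hn) (by positivity)

lemma choose_lower (n r : ℕ) (hr : 2 ≤ r) (hrn : ((r:ℝ)) ≤ (n:ℝ) ^ ((1:ℝ)/3)) (hn : 8 ≤ n) :
    (n:ℝ) ^ ((2:ℝ)/3) / 2 ≤ ((n - 1).choose (r - 1) : ℝ) := by
  have hnp : (0:ℝ) < (n:ℝ) := by positivity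
  have h2r := two_r_le n r hr hrn hn
  have hcast : ((n - 1 + 1 - (r - 1) : ℕ) : ℝ) = (n:ℝ) - (r:ℝ) + 1 := by
    have : n - 1 + 1 - (r - 1) = n - r + 1 := by omega
    rw [this]
    push_cast [Nat.sub_add_cancel, Nat.cast_sub (by omega : r ≤ n)]
    ring
  have hkey : (((n - 1 + 1 - (r - 1) : ℕ)) ^ (r - 1) : ℝ) / (Nat.factorial (r-1) : ℝ) ≤ ((n - 1).choose (r - 1) : ℝ) := by
    exact_mod_cast Nat.pow_le_choose (r - 1) (n - 1) (α := ℝ)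
  have hfact : ((Nat.factorial (r-1) : ℕ) : ℝ) ≤ ((r - 1 : ℕ) : ℝ) ^ (r - 1) := by
    exact_mod_cast Nat.factorial_le_pow (r - 1)
  set a : ℝ := ((n - 1 + 1 - (r - 1) : ℕ) : ℝ) with haa
  set k : ℕ := r - 1 with hk
  have hrr : (2*(r:ℝ)) ≤ (n:ℝ) := by exact_mod_cast h2r
  have hapos : (0:ℝ) < a := by rw [hcast]; linarith
  have hkpos : (0:ℝ) < ((k:ℕ):ℝ) := by
    have : 1 ≤ k := by omega
    exact_mod_cast this
  have hstep1 : a ^ k / ((k:ℕ):ℝ) ^ k ≤ a ^ k / ((Nat.factorial k : ℕ) : ℝ) :=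
    div_le_div_of_nonneg_left (by positivity) (by positivity) hfact
  have hk13 : ((k:ℕ):ℝ) ≤ (n:ℝ) ^ ((1:ℝ)/3) := by
    calc ((k:ℕ):ℝ) ≤ (r:ℝ) := by exact_mod_cast Nat.sub_le r 1
      _ ≤ _ := hrn
  have ha2 : (n:ℝ)/2 ≤ a := by rw [hcast]; linarith
  have hq1 : (1:ℝ) ≤ a / k := by
    rw [le_div_iff₀ hkpos]
    have h13 : (n:ℝ) ^ ((1:ℝ)/3) ≤ (n:ℝ)/2 := by
      have hb3 : ((n:ℝ) ^ ((1:ℝ)/3)) ^ (3:ℕ) = (n:ℝ) := by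
        rw [← Real.rpow_natCast ((n:ℝ) ^ ((1:ℝ)/3)) 3, ← Real.rpow_mul hnp.le]; norm_num
      have hb2 : (2:ℝ) ≤ (n:ℝ)^((1:ℝ)/3) := le_trans (by exact_mod_cast hr) hrn
      set b := (n:ℝ) ^ ((1:ℝ)/3) with hb
      have h4 : (4:ℝ) ≤ b*b := by nlinarith [hb2]
      have h5 : (0:ℝ) ≤ (b*b - 4)*b := mul_nonneg (by linarith) (by linarith)
      have h6 : b^(3:ℕ) = (b*b)*b := by ring
      nlinarith [hb3]
    linarith
  have hq2 : a / k ≤ (a/k) ^ k := le_self_pow₀ hq1 (by omega)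
  have hstep2 : (a/k)^k = a^k / ((k:ℕ):ℝ)^k := div_pow a _ k
  have hmul : (n:ℝ)^((2:ℝ)/3) * (n:ℝ)^((1:ℝ)/3) = (n:ℝ) := by
    rw [← Real.rpow_add hnp]; norm_num
  have h13pos : (0:ℝ) < (n:ℝ)^((1:ℝ)/3) := by positivity
  have hdiv : (n:ℝ)^((2:ℝ)/3)/2 ≤ a / k := by
    calc (n:ℝ)^((2:ℝ)/3)/2 = ((n:ℝ)/2) / ((n:ℝ)^((1:ℝ)/3)) := by
          rw [eq_div_iff (ne_of_gt h13pos)]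
          field_simp
          linarith [hmul]
      _ ≤ a / k := div_le_div₀ hapos.le ha2 hkpos hk13
  calc (n:ℝ)^((2:ℝ)/3)/2 ≤ a/k := hdiv
    _ ≤ (a/k)^k := hq2
    _ = a^k / ((k:ℕ):ℝ)^k := hstep2
    _ ≤ a^k / ((Nat.factorial k : ℕ):ℝ) := hstep1
    _ ≤ ((n - 1).choose (r - 1) : ℝ) := hkey

lemma log_le_six (n : ℕ) (hn : 8 ≤ n) : Real.log n ≤ 6 * (n:ℝ) ^ ((1:ℝ)/6) := by
  have hnp : (0:ℝ) < (n:ℝ) := by positivity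
  have h6 : (0:ℝ) < (n:ℝ) ^ ((1:ℝ)/6) := by positivity
  have h1 : Real.log ((n:ℝ) ^ ((1:ℝ)/6)) = (1/6) * Real.log n := Real.log_rpow hnp _
  have h2 : Real.log ((n:ℝ) ^ ((1:ℝ)/6)) ≤ (n:ℝ) ^ ((1:ℝ)/6) - 1 :=
    Real.log_le_sub_one_of_pos h6
  linarith

lemma pc_upper (n r : ℕ) (hr : 2 ≤ r) (hrn : ((r:ℝ)) ≤ (n:ℝ) ^ ((1:ℝ)/3)) (hn : 8 ≤ n) :
    pc n r ≤ 24 * (n:ℝ) ^ (-(1:ℝ)/6) := by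
  have hnp : (0:ℝ) < (n:ℝ) := by positivity
  have hln : (0:ℝ) ≤ Real.log n := Real.log_nonneg (by exact_mod_cast Nat.one_le_of_lt hn)
  have hC := choose_lower n r hr hrn hn
  have hCpos : (0:ℝ) < (n:ℝ)^((2:ℝ)/3)/2 := by positivity
  have hlr : (0:ℝ) ≤ Real.log r := Real.log_nonneg (by exact_mod_cast Nat.one_le_of_lt hr)
  have hL : ((r : ℝ) + 1) * Real.log n - (r : ℝ) * Real.log r ≤ 2*(n:ℝ)^((1:ℝ)/3)*Real.log n := by
    have h2 : (2:ℝ) ≤ (r:ℝ) := by exact_mod_cast hr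
    nlinarith [mul_nonneg (le_trans (by linarith) hrn : (0:ℝ) ≤ (n:ℝ)^((1:ℝ)/3)) hln]
  have hstep : pc n r ≤ (2*(n:ℝ)^((1:ℝ)/3)*Real.log n) / ((n:ℝ)^((2:ℝ)/3)/2) := by
    unfold pc
    exact div_le_div₀ (by positivity) hL hCpos hC
  have heq : (2*(n:ℝ)^((1:ℝ)/3)*Real.log n) / ((n:ℝ)^((2:ℝ)/3)/2)
      = 4 * Real.log n * ((n:ℝ)^((1:ℝ)/3) / (n:ℝ)^((2:ℝ)/3)) := by
    field_simp
    ring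
  have hpow : (n:ℝ)^((1:ℝ)/3) / (n:ℝ)^((2:ℝ)/3) = (n:ℝ)^(-(1:ℝ)/3) := by
    rw [← Real.rpow_sub hnp]
    norm_num
  have hlog6 := log_le_six n hn
  have hfin : 4 * Real.log n * (n:ℝ)^(-(1:ℝ)/3) ≤ 24 * (n:ℝ)^((1:ℝ)/6) * (n:ℝ)^(-(1:ℝ)/3) := by
    have h3 : (0:ℝ) ≤ (n:ℝ)^(-(1:ℝ)/3) := by positivity
    nlinarith [h3, hlog6]
  have hpow2 : (n:ℝ)^((1:ℝ)/6) * (n:ℝ)^(-(1:ℝ)/3) = (n:ℝ)^(-(1:ℝ)/6) := by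
    rw [← Real.rpow_add hnp]
    norm_num
  calc pc n r ≤ (2*(n:ℝ)^((1:ℝ)/3)*Real.log n) / ((n:ℝ)^((2:ℝ)/3)/2) := hstep
    _ = 4 * Real.log n * ((n:ℝ)^((1:ℝ)/3) / (n:ℝ)^((2:ℝ)/3)) := heq
    _ = 4 * Real.log n * (n:ℝ)^(-(1:ℝ)/3) := by rw [hpow]
    _ ≤ 24 * (n:ℝ)^((1:ℝ)/6) * (n:ℝ)^(-(1:ℝ)/3) := hfin
    _ = 24 * (n:ℝ)^(-(1:ℝ)/6) := by rw [mul_assoc, hpow2]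


set_option maxHeartbeats 1000000 in
lemma analytic_bound (ε : ℝ) (hε0 : 0 < ε) (hε1 : ε < 1) (n r : ℕ) (hr : 2 ≤ r)
    (hrn : ((r:ℝ)) ≤ (n:ℝ) ^ ((1:ℝ)/3)) (hn : 8 ≤ n)
    (hlogn : 3 * Real.log 2 ≤ ε * Real.log n)
    (hpp : (1-ε) * pc n r ≤ min (ε/(2-ε)) (1/2)) :
    (n:ℝ) ^ (ε/2) ≤ (n:ℝ) * ((n - 1).choose r : ℝ) *
      (1 - (1-ε)*pc n r) ^ ((n - 1).choose (r - 1)) := by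
  have hnp : (0:ℝ) < (n:ℝ) := by positivity
  have hrpos : (0:ℝ) < (r:ℝ) := by positivity
  have h2rn : 2 * r ≤ n := two_r_le n r hr hrn hn
  have hrr : 2*(r:ℝ) ≤ (n:ℝ) := by exact_mod_cast h2rn
  set p : ℝ := (1-ε) * pc n r with hpdef
  set ln : ℝ := Real.log n with hln
  set lr : ℝ := Real.log r with hlr
  set rR : ℝ := (r:ℝ) with hrR
  set L : ℝ := (rR+1)*ln - rR*lr with hL
  have hLnn : 0 ≤ L := L_nonneg n r hr hrn hn
  have hp0 : 0 ≤ p := mul_nonneg (by linarith) (pc_nonneg n r hr hrn hn)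
  have hp2 : p ≤ 1/2 := le_trans hpp (min_le_right _ _)
  have hpe : p ≤ ε/(2-ε) := le_trans hpp (min_le_left _ _)
  have h1p : (0:ℝ) < 1 - p := by linarith
  set m : ℕ := (n - 1).choose (r - 1) with hm
  set C1 : ℝ := (m:ℝ) with hC1
  have hC1pos : (0:ℝ) < C1 := by
    have h : 0 < m := Nat.choose_pos (by omega)
    rw [hC1]
    exact_mod_cast h
  have hpc : pc n r = L / C1 := rfl
  have hpCL : C1 * p = (1-ε)*L := by
    rw [hpdef, hpc]
    field_simp
  -- key1 : exp (-(1-ε/2)*L) ≤ (1-p)^m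
  have hlog1p : -Real.log (1-p) ≤ p/(1-p) := by
    have h := Real.log_le_sub_one_of_pos (show (0:ℝ) < (1-p)⁻¹ by positivity)
    rw [Real.log_inv] at h
    have h2 : (1-p)⁻¹ - 1 = p/(1-p) := by field_simp; ring
    linarith
  have hpe' : p*(2-ε) ≤ ε := by
    rw [← le_div_iff₀ (by linarith : (0:ℝ) < 2-ε)]
    exact hpe
  have hfac : (1-ε) ≤ (1-ε/2)*(1-p) := by nlinarith [hpe']
  have hmain : C1 * (p/(1-p)) ≤ (1-ε/2)*L := by
    rw [mul_div_assoc']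
    rw [div_le_iff₀ h1p, hpCL]
    calc (1-ε)*L ≤ ((1-ε/2)*(1-p))*L := mul_le_mul_of_nonneg_right hfac hLnn
      _ = (1-ε/2)*L*(1-p) := by ring
  have key1 : Real.exp (-((1-ε/2)*L)) ≤ (1-p)^m := by
    rw [← Real.exp_log (pow_pos h1p m), Real.log_pow]
    apply Real.exp_le_exp.mpr
    have h1 : C1 * (-Real.log (1-p)) ≤ C1 * (p/(1-p)) :=
      mul_le_mul_of_nonneg_left hlog1p hC1pos.le
    have : (m:ℝ) = C1 := rfl
    nlinarith [h1, hmain]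
  -- key2
  set s' : ℝ := (n:ℝ) - rR with hs'
  have hspos : (0:ℝ) < s' := by rw [hs']; linarith
  have key2 : s'^r / rR^r ≤ ((n - 1).choose r : ℝ) := by
    have hcast : ((n - 1 + 1 - r : ℕ) : ℝ) = s' := by
      have : n - 1 + 1 - r = n - r := by omega
      rw [this, Nat.cast_sub (by omega : r ≤ n)]
    have hkey : (((n - 1 + 1 - r : ℕ)) ^ r : ℝ) / (Nat.factorial r : ℝ) ≤ ((n - 1).choose r : ℝ) := by
      exact_mod_cast Nat.pow_le_choose r (n - 1) (α := ℝ)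
    rw [hcast] at hkey
    refine le_trans ?_ hkey
    apply div_le_div_of_nonneg_left (by positivity) (by positivity)
    rw [hrR]
    exact_mod_cast Nat.factorial_le_pow r
  -- combine
  have hchain : (n:ℝ) * (s'^r/rR^r) * Real.exp (-((1-ε/2)*L)) ≤
      (n:ℝ) * ((n - 1).choose r : ℝ) * (1-p)^m := by
    apply mul_le_mul (mul_le_mul_of_nonneg_left key2 hnp.le) key1 (Real.exp_pos _).le
    positivity
  refine le_trans ?_ hchain
  -- exponential form
  have e1 : Real.exp ln = (n:ℝ) := Real.exp_log hnp
  have e2 : Real.exp (Real.log s' * rR) = s'^r := by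
    rw [hrR, ← Real.rpow_def_of_pos hspos, Real.rpow_natCast]
  have e3 : Real.exp (lr * rR) = rR^r := by
    rw [hlr, hrR, ← Real.rpow_def_of_pos hrpos, Real.rpow_natCast]
  have hrhs : Real.exp (ln + rR * Real.log s' - rR * lr + -((1-ε/2)*L)) =
      (n:ℝ) * (s'^r/rR^r) * Real.exp (-((1-ε/2)*L)) := by
    rw [show ln + rR * Real.log s' - rR * lr + -((1-ε/2)*L)
        = ln + (Real.log s' * rR - lr * rR) + -((1-ε/2)*L) from by ring,
      Real.exp_add, Real.exp_add, Real.exp_sub, e1, e2, e3]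
  rw [← hrhs, Real.rpow_def_of_pos hnp]
  apply Real.exp_le_exp.mpr
  -- scalar inequality
  have hlr3 : lr ≤ ln/3 := log_r_le n r hr hrn hn
  have hlogs : ln - Real.log 2 ≤ Real.log s' := by
    have h1 : Real.log ((n:ℝ)/2) = ln - Real.log 2 := Real.log_div (ne_of_gt hnp) (by norm_num)
    rw [← h1]
    exact Real.log_le_log (by linarith) (by rw [hs']; linarith)
  have step1 : 0 ≤ (ε/2)*(ln - lr) - Real.log 2 := by
    have h := mul_nonneg hε0.le (by linarith : (0:ℝ) ≤ ln/3 - lr)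
    have h2 : ε * (ln/3 - lr) = ε*ln/3 - ε*lr := by ring
    rw [h2] at h
    have h3 : (ε/2)*(ln - lr) = ε*ln/2 - ε*lr/2 := by ring
    rw [h3]
    linarith [hlogn, h]
  have step2 : 0 ≤ rR * ((ε/2)*(ln - lr) - Real.log 2) := mul_nonneg hrpos.le step1
  have step3 : rR*(ln - Real.log 2) ≤ rR * Real.log s' :=
    mul_le_mul_of_nonneg_left hlogs hrpos.le
  have hexp : rR * ((ε/2)*(ln - lr) - Real.log 2)
      = (ε/2)*(rR*ln) - (ε/2)*(rR*lr) - rR*Real.log 2 := by ring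
  rw [hexp] at step2
  rw [hL]
  have hgoal : ln + rR * Real.log s' - rR * lr + -((1-ε/2)*((rR+1)*ln - rR*lr))
      - ln * (ε/2) = (rR * Real.log s' - (rR*ln - rR*Real.log 2))
      + ((ε/2)*(rR*ln) - (ε/2)*(rR*lr) - rR*Real.log 2) := by ring
  have hstep3' : 0 ≤ rR * Real.log s' - (rR*ln - rR*Real.log 2) := by
    have : rR*(ln - Real.log 2) = rR*ln - rR*Real.log 2 := by ring
    linarith [step3, this.symm.le]
  linarith [hgoal, hstep3', step2]


set_option maxHeartbeats 1000000 in
/-- for `ε ∈ (0, 1)`, `2 ≤ r(n) = o(n^{1/3})` and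
`p(n) = (1-ε) p_c(n, r(n))`, the expectation `E[Y_n]` tends to infinity. -/
theorem expect_Ycount_tendsto_atTop (ε : ℝ) (hε : ε ∈ Set.Ioo (0 : ℝ) 1)
    (r : ℕ → ℕ) (hr : ∀ n, 2 ≤ r n)
    (hro : (fun n => (r n : ℝ)) =o[atTop] fun n : ℕ => (n : ℝ) ^ ((1 : ℝ) / 3)) :
    Tendsto
      (fun n => bexpect ((1 - ε) * pc n (r n))
        (fun ω : Sym2 (Finset (Fin n)) → Bool => (Ycount n (r n) ω : ℝ)))
      atTop atTop := by
  obtain ⟨hε0, hε1⟩ := hε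
  have hev1 : ∀ᶠ n : ℕ in atTop, ((r n : ℝ)) ≤ (n:ℝ) ^ ((1:ℝ)/3) := by
    filter_upwards [hro.def one_pos] with n hb
    rw [Real.norm_eq_abs, Real.norm_eq_abs, abs_of_nonneg (by positivity),
      abs_of_nonneg (by positivity)] at hb
    linarith
  have hev2 : ∀ᶠ n : ℕ in atTop, 8 ≤ n := eventually_ge_atTop 8
  have hev3 : ∀ᶠ n : ℕ in atTop, 3 * Real.log 2 ≤ ε * Real.log n := by
    have hlog : Tendsto (fun n : ℕ => Real.log n) atTop atTop :=
      Real.tendsto_log_atTop.comp tendsto_natCast_atTop_atTop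
    filter_upwards [hlog.eventually_ge_atTop (3 * Real.log 2 / ε)] with n h
    rw [div_le_iff₀ hε0] at h
    linarith
  have hposmin : 0 < min (ε/(2-ε)) (1/2 : ℝ) :=
    lt_min (div_pos hε0 (by linarith)) (by norm_num)
  have hev4 : ∀ᶠ n : ℕ in atTop, (24:ℝ) * (n:ℝ) ^ (-(1:ℝ)/6) ≤ min (ε/(2-ε)) (1/2) := by
    have h1 : Tendsto (fun x : ℝ => x ^ (-(1:ℝ)/6)) atTop (nhds 0) := by
      have := tendsto_rpow_neg_atTop (by norm_num : (0:ℝ) < 1/6)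
      convert this using 2
      norm_num
    have hto : Tendsto (fun n : ℕ => (24:ℝ) * (n:ℝ) ^ (-(1:ℝ)/6)) atTop (nhds 0) := by
      have := (h1.comp tendsto_natCast_atTop_atTop).const_mul (24:ℝ)
      simpa using this
    filter_upwards [hto.eventually (gt_mem_nhds hposmin)] with n h
    exact h.le
  have hmain : ∀ᶠ n : ℕ in atTop, (n:ℝ)^(ε/2) ≤ bexpect ((1 - ε) * pc n (r n))
      (fun ω : Sym2 (Finset (Fin n)) → Bool => (Ycount n (r n) ω : ℝ)) := by
    filter_upwards [hev1, hev2, hev3, hev4] with n h1 h2 h3 h4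
    have hr2 : 2 ≤ r n := hr n
    have hpcn := pc_nonneg n (r n) hr2 h1 h2
    have hple : (1-ε) * pc n (r n) ≤ pc n (r n) :=
      mul_le_of_le_one_left hpcn (by linarith)
    have hppc : (1-ε) * pc n (r n) ≤ min (ε/(2-ε)) (1/2) :=
      le_trans (le_trans hple (pc_upper n (r n) hr2 h1 h2)) h4
    have hp0 : 0 ≤ (1-ε) * pc n (r n) := mul_nonneg (by linarith) hpcn
    have hp1 : (1-ε) * pc n (r n) ≤ 1 :=
      le_trans hppc (le_trans (min_le_right _ _) (by norm_num))
    have h2rn : 2 * r n ≤ n := two_r_le n (r n) hr2 h1 h2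
    calc (n:ℝ)^(ε/2) ≤ (n:ℝ) * ((n - 1).choose (r n) : ℝ) *
          (1 - (1-ε)*pc n (r n)) ^ ((n - 1).choose (r n - 1)) :=
        analytic_bound ε hε0 hε1 n (r n) hr2 h1 h2 h3 hppc
      _ ≤ _ := main_lower n (r n) ((1-ε) * pc n (r n)) hp0 hp1 hr2 (by omega)
  exact tendsto_atTop_mono' atTop hmain
    ((tendsto_rpow_atTop (by linarith : 0 < ε/2)).comp tendsto_natCast_atTop_atTop)

end
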